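/- For any data-graph G and positive-fragment node expression ν of regular XPath, one can reduce global satisfaction to origin satisfaction: let G' be obtained from G by fixing an enumeration p_1,…,p_n of V_G, adding a fresh node p_0 (arbitrary data value) with a self-loop on a fresh edge label 'loop', and adding fresh-label 'ε'-edges (p_i, ε, p_{i+1}) for 0 ≤ i ≤ n where p_{n+1} = p_0. Then G satisfies ν at every node if and only if G', p_0 satisfies the node expression ⟨(ε·[f(ν)])^* · ε · loop⟩, where f(ν) replaces every wildcard subformula '_' in ν by the finite union ⋃_{a ∈ Σ_e} a. -/

import Mathlib

structure DataGraph (σe σn : Type) where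
  V : Set ℕ
  E : Set (ℕ × σe × ℕ)
  D : ℕ → σn

/- Syntax of positive regular XPath with a wildcard path expression `any` (written `_` in the
paper), matching any edge regardless of its label. -/
mutual
inductive PathExpr (σe σn : Type) where
  | eps : PathExpr σe σn
  | any : PathExpr σe σn
  | label : σe → PathExpr σe σn
  | inv : σe → PathExpr σe σn
  | test : NodeExpr σe σn → PathExpr σe σn
  | concat : PathExpr σe σn → PathExpr σe σn → PathExpr σe σn
  | union : PathExpr σe σn → PathExpr σe σn → PathExpr σe σn
  | inter : PathExpr σe σn → PathExpr σe σn → PathExpr σe σn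
  | star : PathExpr σe σn → PathExpr σe σn

inductive NodeExpr (σe σn : Type) where
  | eq : σn → NodeExpr σe σn
  | ne : σn → NodeExpr σe σn
  | and : NodeExpr σe σn → NodeExpr σe σn → NodeExpr σe σn
  | or : NodeExpr σe σn → NodeExpr σe σn → NodeExpr σe σn
  | ex : PathExpr σe σn → NodeExpr σe σn
  | exEq : PathExpr σe σn → PathExpr σe σn → NodeExpr σe σn
  | exNe : PathExpr σe σn → PathExpr σe σn → NodeExpr σe σn
end

/- Semantics. -/
mutual
def pathSem {σe σn : Type} (G : DataGraph σe σn) : PathExpr σe σn → ℕ → ℕ → Prop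
  | .eps, v, w => v = w ∧ v ∈ G.V
  | .any, v, w => ∃ a, (v, a, w) ∈ G.E
  | .label a, v, w => (v, a, w) ∈ G.E
  | .inv a, v, w => (w, a, v) ∈ G.E
  | .test ν, v, w => v = w ∧ nodeSem G ν v
  | .concat α β, v, w => ∃ u, pathSem G α v u ∧ pathSem G β u w
  | .union α β, v, w => pathSem G α v w ∨ pathSem G β v w
  | .inter α β, v, w => pathSem G α v w ∧ pathSem G β v w
  | .star α, v, w => v ∈ G.V ∧ w ∈ G.V ∧
      Relation.ReflTransGen (fun x y => pathSem G α x y) v w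

def nodeSem {σe σn : Type} (G : DataGraph σe σn) : NodeExpr σe σn → ℕ → Prop
  | .eq c, v => v ∈ G.V ∧ G.D v = c
  | .ne c, v => v ∈ G.V ∧ G.D v ≠ c
  | .and ν ν', v => nodeSem G ν v ∧ nodeSem G ν' v
  | .or ν ν', v => nodeSem G ν v ∨ nodeSem G ν' v
  | .ex α, v => ∃ w, pathSem G α v w
  | .exEq α β, v => ∃ w u, pathSem G α v w ∧ pathSem G β v u ∧ G.D w = G.D u
  | .exNe α β, v => ∃ w u, pathSem G α v w ∧ pathSem G β v u ∧ G.D w ≠ G.D u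
end

/-- The union path expression `a ∪ b ∪ … ` over a nonempty list of edge labels. -/
def unionOf {σe σn : Type} : σe → List σe → PathExpr σe σn
  | a, [] => .label a
  | a, b :: l => .union (.label a) (unionOf b l)

/- `elimAny` replaces every wildcard subformula by the explicit finite union over the edge
alphabet (given by the nonempty enumeration `a :: l`). -/
mutual
def elimAnyP {σe σn : Type} (a : σe) (l : List σe) : PathExpr σe σn → PathExpr σe σn
  | .eps => .eps
  | .any => unionOf a l
  | .label b => .label b
  | .inv b => .inv b
  | .test ν => .test (elimAnyN a l ν)
  | .concat α β => .concat (elimAnyP a l α) (elimAnyP a l β)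
  | .union α β => .union (elimAnyP a l α) (elimAnyP a l β)
  | .inter α β => .inter (elimAnyP a l α) (elimAnyP a l β)
  | .star α => .star (elimAnyP a l α)

def elimAnyN {σe σn : Type} (a : σe) (l : List σe) : NodeExpr σe σn → NodeExpr σe σn
  | .eq c => .eq c
  | .ne c => .ne c
  | .and ν ν' => .and (elimAnyN a l ν) (elimAnyN a l ν')
  | .or ν ν' => .or (elimAnyN a l ν) (elimAnyN a l ν')
  | .ex α => .ex (elimAnyP a l α)
  | .exEq α β => .exEq (elimAnyP a l α) (elimAnyP a l β)
  | .exNe α β => .exNe (elimAnyP a l α) (elimAnyP a l β)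
end

/- Relabelling an expression along a map of edge alphabets. -/
mutual
def mapP {σe τ σn : Type} (g : σe → τ) : PathExpr σe σn → PathExpr τ σn
  | .eps => .eps
  | .any => .any
  | .label b => .label (g b)
  | .inv b => .inv (g b)
  | .test ν => .test (mapN g ν)
  | .concat α β => .concat (mapP g α) (mapP g β)
  | .union α β => .union (mapP g α) (mapP g β)
  | .inter α β => .inter (mapP g α) (mapP g β)
  | .star α => .star (mapP g α)

def mapN {σe τ σn : Type} (g : σe → τ) : NodeExpr σe σn → NodeExpr τ σn
  | .eq c => .eq c
  | .ne c => .ne c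
  | .and ν ν' => .and (mapN g ν) (mapN g ν')
  | .or ν ν' => .or (mapN g ν) (mapN g ν')
  | .ex α => .ex (mapP g α)
  | .exEq α β => .exEq (mapP g α) (mapP g β)
  | .exNe α β => .exNe (mapP g α) (mapP g β)
end

mutual
theorem pathSem_mem {σe σn : Type} {G : DataGraph σe σn}
    (hwf : ∀ e ∈ G.E, e.1 ∈ G.V ∧ e.2.2 ∈ G.V) :
    ∀ (α : PathExpr σe σn) (v w : ℕ), pathSem G α v w → v ∈ G.V ∧ w ∈ G.V
  | .eps, v, w, h => by
      simp only [pathSem] at h; exact ⟨h.2, h.1 ▸ h.2⟩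
  | .any, v, w, h => by
      obtain ⟨b, hb⟩ := h; exact hwf _ hb
  | .label b, v, w, h => hwf _ h
  | .inv b, v, w, h => ⟨(hwf _ h).2, (hwf _ h).1⟩
  | .test ν, v, w, h => by
      simp only [pathSem] at h
      exact ⟨nodeSem_mem hwf ν v h.2, h.1 ▸ nodeSem_mem hwf ν v h.2⟩
  | .concat α β, v, w, h => by
      obtain ⟨u, h1, h2⟩ := h
      exact ⟨(pathSem_mem hwf α v u h1).1, (pathSem_mem hwf β u w h2).2⟩
  | .union α β, v, w, h => by
      exact h.elim (fun h => pathSem_mem hwf α v w h) (fun h => pathSem_mem hwf β v w h)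
  | .inter α β, v, w, h => pathSem_mem hwf α v w h.1
  | .star α, v, w, h => ⟨h.1, h.2.1⟩

theorem nodeSem_mem {σe σn : Type} {G : DataGraph σe σn}
    (hwf : ∀ e ∈ G.E, e.1 ∈ G.V ∧ e.2.2 ∈ G.V) :
    ∀ (ν : NodeExpr σe σn) (v : ℕ), nodeSem G ν v → v ∈ G.V
  | .eq c, v, h => h.1
  | .ne c, v, h => h.1
  | .and ν ν', v, h => nodeSem_mem hwf ν v h.1
  | .or ν ν', v, h => h.elim (fun h => nodeSem_mem hwf ν v h) (fun h => nodeSem_mem hwf ν' v h)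
  | .ex α, v, h => by obtain ⟨w, hw⟩ := h; exact (pathSem_mem hwf α v w hw).1
  | .exEq α β, v, h => by obtain ⟨w, u, h1, _⟩ := h; exact (pathSem_mem hwf α v w h1).1
  | .exNe α β, v, h => by obtain ⟨w, u, h1, _⟩ := h; exact (pathSem_mem hwf α v w h1).1
end

theorem unionOf_sem {σe σn : Type} {G : DataGraph σe σn} {G' : DataGraph (σe ⊕ Bool) σn}
    (hE : ∀ (x : ℕ) (b : σe) (y : ℕ), (x, Sum.inl b, y) ∈ G'.E ↔ (x, b, y) ∈ G.E) :
    ∀ (b : σe) (l : List σe) (v w : ℕ),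
      pathSem G' (mapP Sum.inl (unionOf b l) : PathExpr (σe ⊕ Bool) σn) v w ↔
        ∃ c ∈ b :: l, (v, c, w) ∈ G.E := by
  intro b l
  induction l generalizing b with
  | nil => intro v w; simp [unionOf, mapP, pathSem, hE]
  | cons c l ih =>
      intro v w
      simp only [unionOf, mapP, pathSem, hE, ih c v w]
      constructor
      · rintro (h | ⟨d, hd, h⟩)
        · exact ⟨b, by simp, h⟩
        · exact ⟨d, List.mem_cons_of_mem _ hd, h⟩
      · rintro ⟨d, hd, h⟩
        simp at hd
        rcases hd with rfl | rfl | hd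
        · exact Or.inl h
        · exact Or.inr ⟨d, by simp, h⟩
        · exact Or.inr ⟨d, by simp [hd], h⟩

mutual
theorem transP {σe σn : Type} {G : DataGraph σe σn} {G' : DataGraph (σe ⊕ Bool) σn}
    (hmem : G.V ⊆ G'.V) (hD : G'.D = G.D)
    (hE : ∀ (x : ℕ) (b : σe) (y : ℕ), (x, Sum.inl b, y) ∈ G'.E ↔ (x, b, y) ∈ G.E)
    (hwf : ∀ e ∈ G.E, e.1 ∈ G.V ∧ e.2.2 ∈ G.V)
    (a : σe) (ls : List σe) (hcov : ∀ x : σe, x ∈ a :: ls) :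
    ∀ (α : PathExpr σe σn) (v w : ℕ),
      (v ∈ G.V → pathSem G' (mapP Sum.inl (elimAnyP a ls α)) v w → pathSem G α v w)
      ∧ (pathSem G α v w → pathSem G' (mapP Sum.inl (elimAnyP a ls α)) v w)
  | .eps, v, w => by
      simp only [elimAnyP, mapP, pathSem]
      exact ⟨fun hv h => ⟨h.1, hv⟩, fun h => ⟨h.1, hmem h.2⟩⟩
  | .any, v, w => by
      simp only [elimAnyP, pathSem, unionOf_sem hE a ls v w]
      constructor
      · rintro - ⟨c, -, h⟩; exact ⟨c, h⟩
      · rintro ⟨c, h⟩; exact ⟨c, hcov c, h⟩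
  | .label b, v, w => by
      simp only [elimAnyP, mapP, pathSem, hE]
      exact ⟨fun _ h => h, fun h => h⟩
  | .inv b, v, w => by
      simp only [elimAnyP, mapP, pathSem, hE]
      exact ⟨fun _ h => h, fun h => h⟩
  | .test μ, v, w => by
      simp only [elimAnyP, mapP, pathSem]
      exact ⟨fun hv h => ⟨h.1, (transN hmem hD hE hwf a ls hcov μ v hv).2 h.2⟩,
        fun h => ⟨h.1, (transN hmem hD hE hwf a ls hcov μ v
          (nodeSem_mem hwf μ v h.2)).1 h.2⟩⟩
  | .concat α β, v, w => by
      simp only [elimAnyP, mapP, pathSem]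
      constructor
      · rintro hv ⟨u, h1, h2⟩
        have g1 := (transP hmem hD hE hwf a ls hcov α v u).1 hv h1
        have hu := (pathSem_mem hwf α v u g1).2
        exact ⟨u, g1, (transP hmem hD hE hwf a ls hcov β u w).1 hu h2⟩
      · rintro ⟨u, h1, h2⟩
        exact ⟨u, (transP hmem hD hE hwf a ls hcov α v u).2 h1,
          (transP hmem hD hE hwf a ls hcov β u w).2 h2⟩
  | .union α β, v, w => by
      simp only [elimAnyP, mapP, pathSem]
      constructor
      · rintro hv (h | h)
        · exact Or.inl ((transP hmem hD hE hwf a ls hcov α v w).1 hv h)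
        · exact Or.inr ((transP hmem hD hE hwf a ls hcov β v w).1 hv h)
      · rintro (h | h)
        · exact Or.inl ((transP hmem hD hE hwf a ls hcov α v w).2 h)
        · exact Or.inr ((transP hmem hD hE hwf a ls hcov β v w).2 h)
  | .inter α β, v, w => by
      simp only [elimAnyP, mapP, pathSem]
      exact ⟨fun hv h => ⟨(transP hmem hD hE hwf a ls hcov α v w).1 hv h.1,
          (transP hmem hD hE hwf a ls hcov β v w).1 hv h.2⟩,
        fun h => ⟨(transP hmem hD hE hwf a ls hcov α v w).2 h.1,
          (transP hmem hD hE hwf a ls hcov β v w).2 h.2⟩⟩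
  | .star α, v, w => by
      simp only [elimAnyP, mapP, pathSem]
      constructor
      · rintro hv ⟨-, -, hrt⟩
        have key : ∀ u, Relation.ReflTransGen
            (fun x y => pathSem G' (mapP Sum.inl (elimAnyP a ls α)) x y) v u →
            Relation.ReflTransGen (fun x y => pathSem G α x y) v u ∧ u ∈ G.V := by
          intro u hu
          induction hu with
          | refl => exact ⟨Relation.ReflTransGen.refl, hv⟩
          | tail hab hbc ih =>
              have g := (transP hmem hD hE hwf a ls hcov α _ _).1 ih.2 hbc
              exact ⟨ih.1.tail g, (pathSem_mem hwf α _ _ g).2⟩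
        exact ⟨hv, (key w hrt).2, (key w hrt).1⟩
      · rintro ⟨hv, hw, hrt⟩
        refine ⟨hmem hv, hmem hw, ?_⟩
        exact Relation.ReflTransGen.mono (fun x y h => (transP hmem hD hE hwf a ls hcov α x y).2 h) v w hrt

theorem transN {σe σn : Type} {G : DataGraph σe σn} {G' : DataGraph (σe ⊕ Bool) σn}
    (hmem : G.V ⊆ G'.V) (hD : G'.D = G.D)
    (hE : ∀ (x : ℕ) (b : σe) (y : ℕ), (x, Sum.inl b, y) ∈ G'.E ↔ (x, b, y) ∈ G.E)
    (hwf : ∀ e ∈ G.E, e.1 ∈ G.V ∧ e.2.2 ∈ G.V)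
    (a : σe) (ls : List σe) (hcov : ∀ x : σe, x ∈ a :: ls) :
    ∀ (ν : NodeExpr σe σn) (v : ℕ), v ∈ G.V →
      (nodeSem G ν v → nodeSem G' (mapN Sum.inl (elimAnyN a ls ν)) v)
      ∧ (nodeSem G' (mapN Sum.inl (elimAnyN a ls ν)) v → nodeSem G ν v)
  | .eq c, v, hv => by
      simp only [elimAnyN, mapN, nodeSem, hD]
      exact ⟨fun h => ⟨hmem hv, h.2⟩, fun h => ⟨hv, h.2⟩⟩
  | .ne c, v, hv => by
      simp only [elimAnyN, mapN, nodeSem, hD]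
      exact ⟨fun h => ⟨hmem hv, h.2⟩, fun h => ⟨hv, h.2⟩⟩
  | .and ν ν', v, hv => by
      simp only [elimAnyN, mapN, nodeSem]
      have h1 := transN hmem hD hE hwf a ls hcov ν v hv
      have h2 := transN hmem hD hE hwf a ls hcov ν' v hv
      tauto
  | .or ν ν', v, hv => by
      simp only [elimAnyN, mapN, nodeSem]
      have h1 := transN hmem hD hE hwf a ls hcov ν v hv
      have h2 := transN hmem hD hE hwf a ls hcov ν' v hv
      tauto
  | .ex α, v, hv => by
      simp only [elimAnyN, mapN, nodeSem]
      exact ⟨fun ⟨w, h⟩ => ⟨w, (transP hmem hD hE hwf a ls hcov α v w).2 h⟩,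
        fun ⟨w, h⟩ => ⟨w, (transP hmem hD hE hwf a ls hcov α v w).1 hv h⟩⟩
  | .exEq α β, v, hv => by
      simp only [elimAnyN, mapN, nodeSem, hD]
      exact ⟨fun ⟨w, u, h1, h2, h3⟩ => ⟨w, u, (transP hmem hD hE hwf a ls hcov α v w).2 h1,
          (transP hmem hD hE hwf a ls hcov β v u).2 h2, h3⟩,
        fun ⟨w, u, h1, h2, h3⟩ => ⟨w, u, (transP hmem hD hE hwf a ls hcov α v w).1 hv h1,
          (transP hmem hD hE hwf a ls hcov β v u).1 hv h2, h3⟩⟩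
  | .exNe α β, v, hv => by
      simp only [elimAnyN, mapN, nodeSem, hD]
      exact ⟨fun ⟨w, u, h1, h2, h3⟩ => ⟨w, u, (transP hmem hD hE hwf a ls hcov α v w).2 h1,
          (transP hmem hD hE hwf a ls hcov β v u).2 h2, h3⟩,
        fun ⟨w, u, h1, h2, h3⟩ => ⟨w, u, (transP hmem hD hE hwf a ls hcov α v w).1 hv h1,
          (transP hmem hD hE hwf a ls hcov β v u).1 hv h2, h3⟩⟩
end

/-- global-to-origin reduction.  Let `G` be a data-graph with node set
`{0,…,n−1}` over the finite alphabet enumerated (without omission) by `a :: ls`.  Form `G'`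
by adding a fresh node `n` (with arbitrary data value, here `G.D n`), a self-loop on the
fresh label `loop = Sum.inr true`, and a Hamiltonian cycle
`p₀ = n, p₁ = 0, …, p_n = n−1, p_{n+1} = p₀` on the fresh label `ε = Sum.inr false`
(original labels are embedded via `Sum.inl`).  Then `G` satisfies `ν` at every node iff
`G', p₀` satisfies `⟨(ε·[f(ν)])* · ε · loop⟩`, where `f(ν)` replaces every wildcard by the
union over the original alphabet. -/
theorem stmt_18 {σe σn : Type} (n : ℕ) (hn : 0 < n)
    (G : DataGraph σe σn) (hV : G.V = {k | k < n})
    (hwf : ∀ e ∈ G.E, e.1 ∈ G.V ∧ e.2.2 ∈ G.V)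
    (a : σe) (ls : List σe) (hcov : ∀ x : σe, x ∈ a :: ls)
    (ν : NodeExpr σe σn)
    (G' : DataGraph (σe ⊕ Bool) σn)
    (hG'V : G'.V = {k | k < n + 1})
    (hG'E : G'.E = {e | ∃ x y : ℕ, ∃ b : σe, (x, b, y) ∈ G.E ∧ e = (x, Sum.inl b, y)} ∪
        ({(n, Sum.inr false, 0), ((n - 1 : ℕ), Sum.inr false, n), (n, Sum.inr true, n)} ∪
          {e | ∃ i : ℕ, i + 1 < n ∧ e = (i, Sum.inr false, i + 1)}))
    (hG'D : G'.D = G.D) :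
    (∀ v ∈ G.V, nodeSem G ν v) ↔
      nodeSem G'
        (.ex (.concat
          (.star (.concat (.label (Sum.inr false))
            (.test (mapN Sum.inl (elimAnyN a ls ν)))))
          (.concat (.label (Sum.inr false)) (.label (Sum.inr true))))) n := by
  have hmem : G.V ⊆ G'.V := by
    rw [hV, hG'V]; intro k hk; exact Nat.lt_succ_of_lt hk
  have hE : ∀ (x : ℕ) (b : σe) (y : ℕ), (x, Sum.inl b, y) ∈ G'.E ↔ (x, b, y) ∈ G.E := by
    intro x b y
    rw [hG'E]
    constructor
    · rintro (⟨x', y', b', hb, heq⟩ | h)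
      · simp only [Prod.mk.injEq, Sum.inl.injEq] at heq
        obtain ⟨rfl, rfl, rfl⟩ := heq
        exact hb
      · exfalso
        simp only [Set.mem_union, Set.mem_insert_iff, Set.mem_singleton_iff,
          Set.mem_setOf_eq, Prod.mk.injEq] at h
        rcases h with (⟨-, h, -⟩ | ⟨-, h, -⟩ | ⟨-, h, -⟩) | ⟨i, -, -, h, -⟩ <;> exact absurd h (by simp)
    · intro h; exact Or.inl ⟨x, y, b, h, rfl⟩
  have hEps : ∀ x y : ℕ, ((x, (Sum.inr false : σe ⊕ Bool), y) ∈ G'.E ↔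
      (x = n ∧ y = 0) ∨ (x = n - 1 ∧ y = n) ∨ (x + 1 < n ∧ y = x + 1)) := by
    intro x y
    rw [hG'E]
    simp only [Set.mem_union, Set.mem_insert_iff, Set.mem_singleton_iff,
      Set.mem_setOf_eq, Prod.mk.injEq]
    constructor
    · rintro (⟨x', y', b', -, -, h, -⟩ | (⟨h1, -, h3⟩ | ⟨h1, -, h3⟩ | ⟨-, h, -⟩) |
        ⟨i, hi, h1, -, h3⟩)
      · exact absurd h (by simp)
      · exact Or.inl ⟨h1, h3⟩
      · exact Or.inr (Or.inl ⟨h1, h3⟩)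
      · exact absurd h (by simp)
      · exact Or.inr (Or.inr ⟨h1 ▸ hi, by omega⟩)
    · rintro (⟨rfl, rfl⟩ | ⟨rfl, rfl⟩ | ⟨h, rfl⟩)
      · exact Or.inr (Or.inl (Or.inl (by simp)))
      · exact Or.inr (Or.inl (Or.inr (Or.inl (by simp))))
      · exact Or.inr (Or.inr ⟨x, h, by simp⟩)
  have hLoop : ∀ x y : ℕ, ((x, (Sum.inr true : σe ⊕ Bool), y) ∈ G'.E ↔ x = n ∧ y = n) := by
    intro x y
    rw [hG'E]
    simp only [Set.mem_union, Set.mem_insert_iff, Set.mem_singleton_iff,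
      Set.mem_setOf_eq, Prod.mk.injEq]
    constructor
    · rintro (⟨x', y', b', -, -, h, -⟩ | (⟨-, h, -⟩ | ⟨-, h, -⟩ | ⟨h1, -, h3⟩) |
        ⟨i, -, -, h, -⟩)
      · exact absurd h (by simp)
      · exact absurd h (by simp)
      · exact absurd h (by simp)
      · exact ⟨h1, h3⟩
      · exact absurd h (by simp)
    · rintro ⟨rfl, rfl⟩
      exact Or.inr (Or.inl (Or.inr (Or.inr (by simp))))
  set μ' : NodeExpr (σe ⊕ Bool) σn := mapN Sum.inl (elimAnyN a ls ν) with hμ'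
  set R : ℕ → ℕ → Prop := fun x y =>
    pathSem G' (.concat (.label (Sum.inr false)) (.test μ')) x y with hR
  have hRdef : ∀ x y, R x y ↔ ((x, (Sum.inr false : σe ⊕ Bool), y) ∈ G'.E ∧ nodeSem G' μ' y) := by
    intro x y
    rw [hR]
    simp only [pathSem]
    constructor
    · rintro ⟨u, h1, rfl, h2⟩; exact ⟨h1, h2⟩
    · rintro ⟨h1, h2⟩; exact ⟨y, h1, rfl, h2⟩
  simp only [nodeSem, pathSem]
  constructor
  · intro H
    have hμ : ∀ v, v < n → nodeSem G' μ' v := by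
      intro v hv
      exact (transN hmem hG'D hE hwf a ls hcov ν v (by rw [hV]; exact hv)).1
        (H v (by rw [hV]; exact hv))
    have chain : ∀ j, j < n → Relation.ReflTransGen R n j := by
      intro j
      induction j with
      | zero => intro h0
                exact Relation.ReflTransGen.single
                  ((hRdef n 0).2 ⟨(hEps n 0).2 (Or.inl ⟨rfl, rfl⟩), hμ 0 h0⟩)
      | succ j ih =>
          intro h
          exact (ih (by omega)).tail
            ((hRdef j (j+1)).2 ⟨(hEps j (j+1)).2 (Or.inr (Or.inr ⟨h, rfl⟩)), hμ (j+1) h⟩)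
    refine ⟨n, n - 1, ⟨?_, ?_, chain (n-1) (by omega)⟩, n, ?_, ?_⟩
    · rw [hG'V]; exact Nat.lt_succ_self n
    · rw [hG'V]; exact Nat.lt_succ_of_lt (by omega)
    · exact (hEps (n-1) n).2 (Or.inr (Or.inl ⟨rfl, rfl⟩))
    · exact (hLoop n n).2 ⟨rfl, rfl⟩
  · rintro ⟨w, u, ⟨-, -, hrt⟩, u', he, hl⟩
    obtain ⟨hu'n, -⟩ := (hLoop u' w).1 hl
    rw [hu'n] at he
    have hu : u = n - 1 := by
      rcases (hEps u n).1 he with ⟨rfl, h⟩ | ⟨rfl, -⟩ | ⟨h1, h2⟩ <;> omega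
    subst hu
    have key : ∀ u, Relation.ReflTransGen R n u →
        u = n ∨ (u < n ∧ ∀ k ≤ u, nodeSem G' μ' k) := by
      intro u hu
      induction hu with
      | refl => exact Or.inl rfl
      | @tail b c hab hbc ih =>
          obtain ⟨hedge, hc⟩ := (hRdef b c).1 hbc
          rcases ih with rfl | ⟨hb, hall⟩
          · rcases (hEps b c).1 hedge with ⟨-, rfl⟩ | ⟨h1, -⟩ | ⟨h1, -⟩
            · exact Or.inr ⟨hn, fun k hk => by rw [Nat.le_zero.mp hk]; exact hc⟩
            · omega
            · omega
          · rcases (hEps b c).1 hedge with ⟨rfl, -⟩ | ⟨-, rfl⟩ | ⟨h1, rfl⟩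
            · omega
            · exact Or.inl rfl
            · refine Or.inr ⟨h1, fun k hk => ?_⟩
              rcases Nat.eq_or_lt_of_le hk with rfl | h
              · exact hc
              · exact hall k (by omega)
    rcases key (n-1) hrt with h | ⟨-, hall⟩
    · omega
    · intro v hv
      rw [hV] at hv
      simp only [Set.mem_setOf_eq] at hv
      exact (transN hmem hG'D hE hwf a ls hcov ν v (by rw [hV]; exact hv)).2
        (hall v (by omega))
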